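/- Strong completeness theorem: if X₀ ⊬ φ, then there is a security game (D, {A_d}_{d∈D}, π), an action d ∈ D of the defender, and a response action a ∈ A_d of the attacker such that (d,a) ⊨ χ for each formula χ ∈ X₀ and (d,a) ⊭ φ. -/

import Mathlib

/-- Formulae of the language Φ: propositional variables, negation, implication,
the necessity modality `N` (`nec`), and the attacker's blameworthiness modality `A` (`blame`). -/
inductive Formula : Type
  | var : ℕ → Formula
  | neg : Formula → Formula
  | imp : Formula → Formula → Formula
  | nec : Formula → Formula
  | blame : Formula → Formula

namespace Formula

/-- Conjunction, defined through `→` and `¬` in the standard way. -/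
def conj (φ ψ : Formula) : Formula := neg (imp φ (neg ψ))

/-- Disjunction, defined through `→` and `¬` in the standard way. -/
def disj (φ ψ : Formula) : Formula := imp (neg φ) ψ

/-- Biconditional, defined through `→` and `¬` in the standard way. -/
def biimp (φ ψ : Formula) : Formula := conj (imp φ ψ) (imp ψ φ)

/-- `R φ` is an abbreviation for `¬(φ → A φ)`. -/
def R (φ : Formula) : Formula := neg (imp φ (blame φ))

end Formula

/-- A formula is a propositional tautology if it evaluates to true under every
truth assignment that respects `¬` and `→` (treating all other formulae as atoms). -/
def IsTaut (φ : Formula) : Prop :=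
  ∀ v : Formula → Bool,
    (∀ ψ, v ψ.neg = !(v ψ)) →
    (∀ ψ χ, v (ψ.imp χ) = (!(v ψ) || v χ)) →
    v φ = true

/-- Provability `⊢ φ` in the logical system for blameworthiness in security games. -/
inductive Prov : Formula → Prop
  | taut {φ} : IsTaut φ → Prov φ
  | truthN (φ : Formula) : Prov ((φ.nec).imp φ)
  | truthA (φ : Formula) : Prov ((φ.blame).imp φ)
  | negIntro (φ : Formula) : Prov (((φ.nec).neg).imp (((φ.nec).neg).nec))
  | distrib (φ ψ : Formula) : Prov (((φ.imp ψ).nec).imp ((φ.nec).imp (ψ.nec)))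
  | unavoid (φ : Formula) : Prov ((φ.nec).imp ((φ.blame).neg))
  | strictCond (φ ψ : Formula) : Prov (((φ.imp ψ).nec).imp ((ψ.blame).imp (φ.imp (φ.blame))))
  | conjAx (φ ψ : Formula) : Prov (((φ.conj ψ).blame).imp ((φ.blame).disj (ψ.blame)))
  | noBlame (φ : Formula) : Prov (((φ.imp (φ.blame)).blame).neg)
  | mp {φ ψ} : Prov (φ.imp ψ) → Prov φ → Prov ψ
  | necRule {φ} : Prov φ → Prov (φ.nec)

/-- `X ⊢ φ`: provability from the theorems of the logical system together with
additional hypotheses `X`, using only the Modus Ponens rule. -/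
inductive ProvFrom (X : Set Formula) : Formula → Prop
  | hyp {φ} : φ ∈ X → ProvFrom X φ
  | thm {φ} : Prov φ → ProvFrom X φ
  | mp {φ ψ} : ProvFrom X (φ.imp ψ) → ProvFrom X φ → ProvFrom X ψ

/-- A set of formulae is consistent if no contradiction is derivable from it. -/
def Consistent (X : Set Formula) : Prop := ¬ ∃ φ, ProvFrom X φ ∧ ProvFrom X φ.neg

/-- A maximal consistent set of formulae. -/
def MaxConsistent (X : Set Formula) : Prop :=
  Consistent X ∧ ∀ Y, X ⊆ Y → Consistent Y → Y = X

/-- A security game: a set `D` of actions of the defender; for each `d ∈ D` a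
nonempty set `A d` of actions of the attacker in response to `d`; and a valuation
assigning to each propositional variable a set of action profiles `(d, a)`. -/
structure SecurityGame where
  D : Type
  A : D → Type
  nonempty : ∀ d, Nonempty (A d)
  val : ℕ → ∀ d : D, A d → Prop

/-- The satisfaction relation `(d, a) ⊨ φ` of a security game. -/
def Sat (G : SecurityGame) : Formula → ∀ d : G.D, G.A d → Prop
  | .var p, d, a => G.val p d a
  | .neg φ, d, a => ¬ Sat G φ d a
  | .imp φ ψ, d, a => Sat G φ d a → Sat G ψ d a
  | .nec φ, _, _ => ∀ (d' : G.D) (a' : G.A d'), Sat G φ d' a'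
  | .blame φ, d, a => Sat G φ d a ∧ ∃ a' : G.A d, ¬ Sat G φ d a'

/-- The set Ω of the canonical game `G(X)`: all maximal consistent sets of formulae
containing `{φ | N φ ∈ X}`. -/
def canonicalOmega (X : Set Formula) : Set (Set Formula) :=
  {ω | MaxConsistent ω ∧ ∀ φ, φ.nec ∈ X → φ ∈ ω}

/-- The indistinguishability relation `ω ∼ ω'` of the canonical game. -/
def simRel (ω ω' : Set Formula) : Prop := ∀ φ : Formula, φ.R ∈ ω ↔ φ.R ∈ ω'

/-- The `∼`-equivalence class `[δ]` of `δ` inside Ω. -/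
def eqClass (X : Set Formula) (δ : Set Formula) : Set (Set Formula) :=
  {ω ∈ canonicalOmega X | simRel δ ω}

/-- The canonical security game `G(X)`. -/
def canonicalGame (X : Set Formula) : SecurityGame where
  D := canonicalOmega X
  A := fun δ => {ω : canonicalOmega X // simRel δ.val ω.val}
  nonempty := fun δ => ⟨⟨δ, fun _ => Iff.rfl⟩⟩
  val := fun p _ a => Formula.var p ∈ a.val.val

open Formula

/-! ### Propositional tautologies -/

lemma taut_id (a : Formula) : IsTaut (a.imp a) := by
  intro v hn hi; simp only [hi, hn]; cases h1 : v a <;> simp [h1]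

lemma taut_k (a b : Formula) : IsTaut (a.imp (b.imp a)) := by
  intro v hn hi; simp only [hi, hn]; cases h1 : v a <;> cases h2 : v b <;> simp [h1, h2]

lemma taut_s (x a b : Formula) :
    IsTaut ((x.imp (a.imp b)).imp ((x.imp a).imp (x.imp b))) := by
  intro v hn hi; simp only [hi, hn]
  cases h1 : v x <;> cases h2 : v a <;> cases h3 : v b <;> simp [h1, h2, h3]

lemma taut_exfalso (a b : Formula) : IsTaut (a.imp (a.neg.imp b)) := by
  intro v hn hi; simp only [hi, hn]; cases h1 : v a <;> cases h2 : v b <;> simp [h1, h2]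

lemma taut_exfalso2 (a b : Formula) : IsTaut (a.neg.imp (a.imp b)) := by
  intro v hn hi; simp only [hi, hn]; cases h1 : v a <;> cases h2 : v b <;> simp [h1, h2]

lemma taut_absurd (a : Formula) : IsTaut ((a.neg.imp a).imp a) := by
  intro v hn hi; simp only [hi, hn]; cases h1 : v a <;> simp [h1]

lemma taut_selfneg (a : Formula) : IsTaut ((a.imp a.neg).imp a.neg) := by
  intro v hn hi; simp only [hi, hn]; cases h1 : v a <;> simp [h1]

lemma taut_contra (a b : Formula) : IsTaut ((a.imp b).imp (b.neg.imp a.neg)) := by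
  intro v hn hi; simp only [hi, hn]; cases h1 : v a <;> cases h2 : v b <;> simp [h1, h2]

lemma taut_dne_elim (a : Formula) : IsTaut (a.neg.neg.imp a) := by
  intro v hn hi; simp only [hi, hn]; cases h1 : v a <;> simp [h1]

lemma taut_dne_intro (a : Formula) : IsTaut (a.imp a.neg.neg) := by
  intro v hn hi; simp only [hi, hn]; cases h1 : v a <;> simp [h1]

lemma taut_notimp1 (a b : Formula) : IsTaut ((a.imp b).neg.imp a) := by
  intro v hn hi; simp only [hi, hn]; cases h1 : v a <;> cases h2 : v b <;> simp [h1, h2]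

lemma taut_notimp2 (a b : Formula) : IsTaut ((a.imp b).neg.imp b.neg) := by
  intro v hn hi; simp only [hi, hn]; cases h1 : v a <;> cases h2 : v b <;> simp [h1, h2]

lemma taut_negimp_conj (a b : Formula) : IsTaut (((a.imp b).neg).imp (a.conj b.neg)) := by
  intro v hn hi; simp only [Formula.conj, hi, hn]
  cases h1 : v a <;> cases h2 : v b <;> simp [h1, h2]

lemma taut_conj_negimp (a b : Formula) : IsTaut ((a.conj b.neg).imp ((a.imp b).neg)) := by
  intro v hn hi; simp only [Formula.conj, hi, hn]
  cases h1 : v a <;> cases h2 : v b <;> simp [h1, h2]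

lemma taut_conj_intro (a b : Formula) : IsTaut (a.imp (b.imp (a.conj b))) := by
  intro v hn hi; simp only [Formula.conj, hi, hn]
  cases h1 : v a <;> cases h2 : v b <;> simp [h1, h2]

lemma taut_curry (c a f : Formula) :
    IsTaut ((c.imp (a.imp f)).imp ((a.conj c).imp f)) := by
  intro v hn hi; simp only [Formula.conj, hi, hn]
  cases h1 : v c <;> cases h2 : v a <;> cases h3 : v f <;> simp [h1, h2, h3]

lemma taut_main (p g q : Formula) :
    IsTaut ((p.imp g).imp (q.neg.imp ((g.imp q).imp p.neg))) := by
  intro v hn hi; simp only [hi, hn]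
  cases h1 : v p <;> cases h2 : v g <;> cases h3 : v q <;> simp [h1, h2, h3]

lemma taut_mk_R (a b : Formula) : IsTaut (a.imp (b.neg.imp ((a.imp b).neg))) := by
  intro v hn hi; simp only [hi, hn]
  cases h1 : v a <;> cases h2 : v b <;> simp [h1, h2]

lemma taut_trans (a b c : Formula) : IsTaut ((a.imp b).imp ((b.imp c).imp (a.imp c))) := by
  intro v hn hi; simp only [hi, hn]
  cases h1 : v a <;> cases h2 : v b <;> cases h3 : v c <;> simp [h1, h2, h3]

/-! ### Derived rules of `Prov` -/

namespace Prov

lemma trans {a b c : Formula} (h1 : Prov (a.imp b)) (h2 : Prov (b.imp c)) :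
    Prov (a.imp c) := .mp (.mp (.taut (taut_trans a b c)) h1) h2

lemma krule {a b : Formula} (h : Prov (a.imp b)) : Prov (a.nec.imp b.nec) :=
  .mp (.distrib a b) (.necRule h)

lemma contrapose {a b : Formula} (h : Prov (a.imp b)) : Prov (b.neg.imp a.neg) :=
  .mp (.taut (taut_contra a b)) h

lemma posIntro (a : Formula) : Prov (a.nec.imp a.nec.nec) := by
  have c2 : Prov ((((a.nec.neg).nec).neg).imp a.nec) :=
    trans (contrapose (negIntro a)) (.taut (taut_dne_elim a.nec))
  have c3 := krule c2
  have c5 : Prov ((((a.nec.neg).nec).neg).imp a.nec.nec) :=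
    trans (negIntro a.nec.neg) c3
  have c6 : Prov (a.nec.imp (((a.nec.neg).nec).neg)) :=
    trans (.taut (taut_dne_intro a.nec)) (contrapose (truthN a.nec.neg))
  exact trans c6 c5

lemma blameCong {a b : Formula} (h1 : Prov (a.imp b)) (h2 : Prov (b.imp a)) :
    Prov (a.blame.imp b.blame) := by
  have s3 : Prov ((a.blame).imp (b.imp b.blame)) :=
    .mp (.strictCond b a) (.necRule h2)
  have s4 : Prov ((a.blame).imp b) := trans (.truthA a) h1
  exact .mp (.mp (.taut (taut_s a.blame b b.blame)) s3) s4

end Prov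

/-! ### ProvFrom basics -/

lemma ProvFrom.mono {X Y : Set Formula} {φ : Formula} (h : ProvFrom X φ) (hs : X ⊆ Y) :
    ProvFrom Y φ := by
  induction h with
  | hyp h => exact .hyp (hs h)
  | thm h => exact .thm h
  | mp _ _ ih1 ih2 => exact .mp ih1 ih2

theorem deduction {X : Set Formula} {φ ψ : Formula}
    (h : ProvFrom (insert φ X) ψ) : ProvFrom X (φ.imp ψ) := by
  induction h with
  | hyp h =>
    rcases h with rfl | h
    · exact .thm (.taut (taut_id _))
    · exact .mp (.thm (.taut (taut_k _ φ))) (.hyp h)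
  | thm h => exact .mp (.thm (.taut (taut_k _ φ))) (.thm h)
  | mp _ _ ih1 ih2 => exact .mp (.mp (.thm (.taut (taut_s φ _ _))) ih1) ih2

lemma compactness {X : Set Formula} {φ : Formula} (h : ProvFrom X φ) :
    ∃ S : Set Formula, S ⊆ X ∧ S.Finite ∧ ProvFrom S φ := by
  induction h with
  | hyp h =>
    exact ⟨{_}, Set.singleton_subset_iff.2 h, Set.finite_singleton _, .hyp rfl⟩
  | thm h => exact ⟨∅, Set.empty_subset _, Set.finite_empty, .thm h⟩
  | mp _ _ ih1 ih2 =>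
    obtain ⟨S1, hs1, hf1, hp1⟩ := ih1
    obtain ⟨S2, hs2, hf2, hp2⟩ := ih2
    exact ⟨S1 ∪ S2, Set.union_subset hs1 hs2, hf1.union hf2,
      .mp (hp1.mono Set.subset_union_left) (hp2.mono Set.subset_union_right)⟩

lemma provFrom_empty {φ : Formula} (h : ProvFrom ∅ φ) : Prov φ := by
  induction h with
  | hyp h => exact absurd h (Set.notMem_empty _)
  | thm h => exact h
  | mp _ _ ih1 ih2 => exact .mp ih1 ih2

lemma not_consistent_all {X : Set Formula} (hc : ¬ Consistent X) (φ : Formula) :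
    ProvFrom X φ := by
  obtain ⟨θ, h1, h2⟩ := not_not.mp hc
  exact .mp (.mp (.thm (.taut (taut_exfalso θ φ))) h1) h2

lemma consistent_insert_neg {X : Set Formula} {φ : Formula} (h : ¬ ProvFrom X φ) :
    Consistent (insert φ.neg X) := by
  intro hc
  exact h (.mp (.thm (.taut (taut_absurd φ))) (deduction (not_consistent_all (not_not_intro hc) φ)))

/-! ### Lindenbaum -/

lemma lindenbaum {X : Set Formula} (hX : Consistent X) :
    ∃ M, X ⊆ M ∧ MaxConsistent M := by
  have H : ∀ c ⊆ {Y | Consistent Y}, IsChain (· ⊆ ·) c → c.Nonempty →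
      ∃ ub ∈ {Y | Consistent Y}, ∀ s ∈ c, s ⊆ ub := by
    rintro c hc hchain ⟨t, ht⟩
    refine ⟨⋃₀ c, ?_, fun s hs => Set.subset_sUnion_of_mem hs⟩
    intro hcon
    obtain ⟨θ, h1, h2⟩ := hcon
    obtain ⟨S1, hs1, hf1, hp1⟩ := compactness h1
    obtain ⟨S2, hs2, hf2, hp2⟩ := compactness h2
    have key : ∀ S : Set Formula, S.Finite → S ⊆ ⋃₀ c → ∃ u ∈ c, S ⊆ u := by
      intro S hSfin
      refine Set.Finite.induction_on S hSfin (fun _ => ⟨t, ht, Set.empty_subset t⟩)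
        (fun {a S} ha hSf ih hsub => ?_)
      obtain ⟨u, hu, hSu⟩ := ih ((Set.subset_insert a S).trans hsub)
      obtain ⟨w, hw, haw⟩ := hsub (Set.mem_insert a S)
      rcases hchain.total hu hw with huw | hwu
      · exact ⟨w, hw, Set.insert_subset haw (hSu.trans huw)⟩
      · exact ⟨u, hu, Set.insert_subset (hwu haw) hSu⟩
    obtain ⟨u1, hu1, hS1u⟩ := key S1 hf1 hs1
    obtain ⟨u2, hu2, hS2u⟩ := key S2 hf2 hs2
    rcases hchain.total hu1 hu2 with h12 | h21
    · exact hc hu2 ⟨θ, hp1.mono (hS1u.trans h12), hp2.mono hS2u⟩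
    · exact hc hu1 ⟨θ, hp1.mono hS1u, hp2.mono (hS2u.trans h21)⟩
  obtain ⟨M, hXM, hmax⟩ := zorn_subset_nonempty {Y | Consistent Y} H X hX
  exact ⟨M, hXM, hmax.1, fun Y hMY hY => hmax.eq_of_ge hY hMY⟩

/-! ### Maximal consistent sets -/

namespace MaxConsistent

variable {M : Set Formula} {φ ψ : Formula}

lemma not_both (hM : MaxConsistent M) (h1 : φ ∈ M) (h2 : φ.neg ∈ M) : False :=
  hM.1 ⟨φ, .hyp h1, .hyp h2⟩

lemma closure (hM : MaxConsistent M) (h : ProvFrom M φ) : φ ∈ M := by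
  have hcons : Consistent (insert φ M) := by
    rintro ⟨θ, h1, h2⟩
    exact hM.1 ⟨θ, .mp (deduction h1) h, .mp (deduction h2) h⟩
  have := hM.2 _ (Set.subset_insert φ M) hcons
  exact this ▸ Set.mem_insert φ M

lemma mem_of_prov (hM : MaxConsistent M) (h : Prov φ) : φ ∈ M := hM.closure (.thm h)

lemma mp_mem (hM : MaxConsistent M) (h1 : (φ.imp ψ) ∈ M) (h2 : φ ∈ M) : ψ ∈ M :=
  hM.closure (.mp (.hyp h1) (.hyp h2))

lemma neg_mem_iff (hM : MaxConsistent M) : φ.neg ∈ M ↔ φ ∉ M := by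
  constructor
  · exact fun h1 h2 => hM.not_both h2 h1
  · intro h
    have hcons : Consistent (insert φ.neg M) := by
      intro hc
      exact h (hM.closure (.mp (.thm (.taut (taut_absurd φ)))
        (deduction (not_consistent_all (not_not_intro hc) φ))))
    have := hM.2 _ (Set.subset_insert _ M) hcons
    exact this ▸ Set.mem_insert _ M

lemma imp_mem_iff (hM : MaxConsistent M) : (φ.imp ψ) ∈ M ↔ (φ ∈ M → ψ ∈ M) := by
  constructor
  · exact fun h1 h2 => hM.mp_mem h1 h2
  · intro h
    by_cases hφ : φ ∈ M
    · exact hM.mp_mem (hM.mem_of_prov (.taut (taut_k ψ φ))) (h hφ)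
    · exact hM.mp_mem (hM.mem_of_prov (.taut (taut_exfalso2 φ ψ))) (hM.neg_mem_iff.2 hφ)

lemma disj_elim (hM : MaxConsistent M) (h : (φ.disj ψ) ∈ M) : φ ∈ M ∨ ψ ∈ M := by
  by_cases hφ : φ ∈ M
  · exact Or.inl hφ
  · exact Or.inr (hM.mp_mem h (hM.neg_mem_iff.2 hφ))

end MaxConsistent

/-! ### The key derived theorem `⊢ ¬A(R τ)` -/

lemma Prov.notBlameR (t : Formula) : Prov (((Formula.R t).blame).neg) := by
  set γ := t.imp t.blame with hγ
  -- work from the hypothesis A(¬γ)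
  have H : Set Formula := ∅
  have h0 : ProvFrom (insert ((γ.neg).blame) ∅) ((γ.neg).blame) := .hyp (Set.mem_insert _ _)
  set X : Set Formula := insert ((γ.neg).blame) ∅ with hX
  have h1 : ProvFrom X γ.neg := .mp (.thm (.truthA γ.neg)) h0
  have h2 : ProvFrom X (t.blame).neg := .mp (.thm (.taut (taut_notimp2 t t.blame))) h1
  have h3 : Prov (((γ.neg).blame).imp ((t.conj (t.blame).neg).blame)) :=
    Prov.blameCong (.taut (taut_negimp_conj t t.blame)) (.taut (taut_conj_negimp t t.blame))
  have h4 : ProvFrom X ((t.conj (t.blame).neg).blame) := .mp (.thm h3) h0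
  have h5 : ProvFrom X ((t.blame).disj (((t.blame).neg).blame)) :=
    .mp (.thm (.conjAx t ((t.blame).neg))) h4
  have h6 : ProvFrom X ((((t.blame).neg)).blame) := .mp h5 h2
  have h7 : Prov ((γ.imp γ.blame).imp ((t.blame).neg)) :=
    .mp (.mp (.taut (taut_main t.blame γ γ.blame)) (.taut (taut_k t.blame t))) (.noBlame t)
  have h9 : Prov ((((γ.imp γ.blame).imp ((t.blame).neg)).nec).imp
      (((((t.blame).neg)).blame).imp ((γ.imp γ.blame).imp ((γ.imp γ.blame).blame)))) :=
    .strictCond (γ.imp γ.blame) ((t.blame).neg)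
  have h10 : ProvFrom X ((γ.imp γ.blame).imp ((γ.imp γ.blame).blame)) :=
    .mp (.mp (.thm h9) (.thm (.necRule h7))) h6
  have h11 : ProvFrom X (γ.imp γ.blame) :=
    .mp (.thm (.taut (taut_exfalso2 γ γ.blame))) h1
  have h12 : ProvFrom X ((γ.imp γ.blame).blame) := .mp h10 h11
  have h13 : ProvFrom X (((γ.neg).blame).neg) :=
    .mp (.mp (.thm (.taut (taut_exfalso _ _))) h12) (.thm (.noBlame γ))
  have h14 : Prov (((γ.neg).blame).imp (((γ.neg).blame).neg)) :=
    provFrom_empty (deduction h13)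
  exact .mp (.taut (taut_selfneg ((γ.neg).blame))) h14

/-! ### The canonical construction -/

def NP (X : Set Formula) : Set Formula := {ψ | ψ.nec ∈ X}

lemma provFrom_NP {X : Set Formula} (hX : MaxConsistent X) {θ : Formula}
    (h : ProvFrom (NP X) θ) : θ.nec ∈ X := by
  induction h with
  | hyp h => exact h
  | thm h => exact hX.mem_of_prov (.necRule h)
  | mp _ _ ih1 ih2 => exact hX.closure (.mp (.mp (.thm (.distrib _ _)) (.hyp ih1)) (.hyp ih2))

lemma nec_mem_omega_iff {X ω : Set Formula} (hX : MaxConsistent X)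
    (hω : ω ∈ canonicalOmega X) {φ : Formula} : φ.nec ∈ ω ↔ φ.nec ∈ X := by
  constructor
  · intro h
    by_contra hn
    have h1 : (φ.nec).neg ∈ X := (hX.neg_mem_iff).2 hn
    have h2 : ((φ.nec).neg).nec ∈ X := hX.closure (.mp (.thm (.negIntro φ)) (.hyp h1))
    exact hω.1.not_both h (hω.2 _ h2)
  · intro h
    exact hω.2 _ (hX.closure (.mp (.thm (Prov.posIntro φ)) (.hyp h)))

lemma self_mem_omega {X : Set Formula} (hX : MaxConsistent X) : X ∈ canonicalOmega X :=
  ⟨hX, fun χ hχ => hX.closure (.mp (.thm (.truthN χ)) (.hyp hχ))⟩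

lemma exists_omega_not_mem {X : Set Formula} (hX : MaxConsistent X) {φ : Formula}
    (h : φ.nec ∉ X) : ∃ ω ∈ canonicalOmega X, φ ∉ ω := by
  have hnp : ¬ ProvFrom (NP X) φ := fun hp => h (provFrom_NP hX hp)
  obtain ⟨ω, hsub, hω⟩ := lindenbaum (consistent_insert_neg hnp)
  refine ⟨ω, ⟨hω, fun χ hχ => hsub (Set.mem_insert_of_mem _ hχ)⟩, fun hmem => ?_⟩
  exact hω.not_both hmem (hsub (Set.mem_insert _ _))

/-! ### Lists of hypotheses -/

def impList : List Formula → Formula → Formula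
  | [], θ => θ
  | a :: l, θ => impList l (a.imp θ)

def topF : Formula := (Formula.var 0).imp (Formula.var 0)

def bigConj : List Formula → Formula
  | [] => topF
  | a :: l => a.conj (bigConj l)

lemma peel {Z : Set Formula} (l : List Formula) (θ : Formula)
    (h : ProvFrom (Z ∪ {x | x ∈ l}) θ) : ProvFrom Z (impList l θ) := by
  induction l generalizing θ with
  | nil => exact h.mono (by intro x hx; rcases hx with hx | hx; exact hx; simp at hx)
  | cons a l ih =>
    refine ih _ (deduction (h.mono ?_))
    intro x hx
    rcases hx with hx | hx
    · exact Set.mem_insert_of_mem _ (Or.inl hx)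
    · rcases List.mem_cons.mp hx with rfl | hx
      · exact Set.mem_insert _ _
      · exact Set.mem_insert_of_mem _ (Or.inr hx)

lemma prov_impList_conj (l : List Formula) (f : Formula) :
    Prov ((impList l f).imp ((bigConj l).imp f)) := by
  induction l generalizing f with
  | nil => exact .taut (taut_k f topF)
  | cons a l ih =>
    exact Prov.trans (ih (a.imp f)) (.taut (taut_curry (bigConj l) a f))

lemma bigConj_mem {ω : Set Formula} (hω : MaxConsistent ω) (l : List Formula)
    (hl : ∀ ℓ ∈ l, ℓ ∈ ω) : bigConj l ∈ ω := by
  induction l with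
  | nil => exact hω.mem_of_prov (.taut (taut_id _))
  | cons a l ih =>
    exact hω.mp_mem (hω.mp_mem (hω.mem_of_prov (.taut (taut_conj_intro a (bigConj l))))
      (hl a List.mem_cons_self)) (ih fun ℓ h => hl ℓ (List.mem_cons_of_mem a h))

lemma no_blame_conj {ω : Set Formula} (hω : MaxConsistent ω) (l : List Formula)
    (hl : ∀ ℓ ∈ l, ∃ τ, ℓ = Formula.R τ ∨ ℓ = (Formula.R τ).neg)
    (h : (bigConj l).blame ∈ ω) : False := by
  induction l with
  | nil =>
    exact hω.not_both h (hω.mem_of_prov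
      (.mp (.unavoid topF) (.necRule (.taut (taut_id (Formula.var 0))))))
  | cons a l ih =>
    have hd := hω.mp_mem (hω.mem_of_prov (.conjAx a (bigConj l))) h
    rcases hω.disj_elim hd with hAa | hAC
    · obtain ⟨τ, hform⟩ := hl a List.mem_cons_self
      rcases hform with rfl | rfl
      · exact hω.not_both hAa (hω.mem_of_prov (Prov.notBlameR τ))
      · have hcong : Prov ((((Formula.R τ).neg).blame).imp ((τ.imp τ.blame).blame)) :=
          Prov.blameCong (.taut (taut_dne_elim (τ.imp τ.blame)))
            (.taut (taut_dne_intro (τ.imp τ.blame)))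
        exact hω.not_both (hω.mp_mem (hω.mem_of_prov hcong) hAa) (hω.mem_of_prov (.noBlame τ))
    · exact ih (fun ℓ h => hl ℓ (List.mem_cons_of_mem a h)) hAC

def Lits (ω : Set Formula) : Set Formula :=
  {ψ | ψ ∈ ω ∧ ∃ τ, ψ = Formula.R τ ∨ ψ = (Formula.R τ).neg}

lemma exists_blame_witness {X ω : Set Formula} (hX : MaxConsistent X)
    (hωΩ : ω ∈ canonicalOmega X) {φ : Formula} (hA : φ.blame ∈ ω) :
    ∃ ω' ∈ canonicalOmega X, simRel ω ω' ∧ φ ∉ ω' := by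
  have hω : MaxConsistent ω := hωΩ.1
  have hcons : Consistent (insert φ.neg (NP X ∪ Lits ω)) := by
    by_contra hc
    have h1 : ProvFrom (NP X ∪ Lits ω) φ :=
      .mp (.thm (.taut (taut_absurd φ))) (deduction (not_consistent_all hc φ))
    obtain ⟨S, hSsub, hSfin, hSp⟩ := compactness h1
    have h2 : ProvFrom (NP X ∪ (S ∩ Lits ω)) φ := hSp.mono (fun x hx => by
      rcases hSsub hx with h | h
      · exact Or.inl h
      · exact Or.inr ⟨hx, h⟩)
    obtain ⟨l, hlmem⟩ : ∃ l : List Formula, ∀ x, x ∈ l ↔ x ∈ S ∩ Lits ω := by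
      refine ⟨(hSfin.inter_of_left (Lits ω)).toFinset.toList, fun x => ?_⟩
      rw [Finset.mem_toList, Set.Finite.mem_toFinset]
    have h3 : ProvFrom (NP X ∪ {x | x ∈ l}) φ := h2.mono (by
      intro x hx
      rcases hx with hx | hx
      · exact Or.inl hx
      · exact Or.inr ((hlmem x).2 hx))
    have h4 : ProvFrom (NP X) (impList l φ) := peel l φ h3
    have h5 : (impList l φ).nec ∈ ω := (nec_mem_omega_iff hX hωΩ).2 (provFrom_NP hX h4)
    have h6 : ((bigConj l).imp φ).nec ∈ ω :=
      hω.mp_mem (hω.mem_of_prov (Prov.krule (prov_impList_conj l φ))) h5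
    have hC : bigConj l ∈ ω := bigConj_mem hω l (fun ℓ h => ((hlmem ℓ).1 h).2.1)
    have hAC : (bigConj l).blame ∈ ω :=
      hω.mp_mem (hω.mp_mem (hω.mp_mem (hω.mem_of_prov (.strictCond (bigConj l) φ)) h6) hA) hC
    exact no_blame_conj hω l (fun ℓ h => ((hlmem ℓ).1 h).2.2) hAC
  obtain ⟨ω', hsub, hω'⟩ := lindenbaum hcons
  have hsub' : NP X ∪ Lits ω ⊆ ω' := (Set.subset_insert _ _).trans hsub
  refine ⟨ω', ⟨hω', fun χ hχ => hsub' (Or.inl hχ)⟩, ?_, fun hmem =>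
    hω'.not_both hmem (hsub (Set.mem_insert _ _))⟩
  intro τ
  constructor
  · intro h
    exact hsub' (Or.inr ⟨h, τ, Or.inl rfl⟩)
  · intro h
    by_contra hn
    have : (Formula.R τ).neg ∈ ω := hω.neg_mem_iff.2 hn
    exact hω'.not_both h (hsub' (Or.inr ⟨this, τ, Or.inr rfl⟩))

/-! ### Truth lemma -/

lemma simRel_symm {a b : Set Formula} (h : simRel a b) : simRel b a := fun τ => (h τ).symm

lemma simRel_trans {a b c : Set Formula} (h1 : simRel a b) (h2 : simRel b c) : simRel a c :=
  fun τ => (h1 τ).trans (h2 τ)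

lemma truth_lemma {X : Set Formula} (hX : MaxConsistent X) (φ : Formula) :
    ∀ (d : (canonicalGame X).D) (a : (canonicalGame X).A d),
      Sat (canonicalGame X) φ d a ↔ φ ∈ a.val.val := by
  induction φ with
  | var p => intro d a; exact Iff.rfl
  | neg ψ ih =>
    intro d a
    have hω : MaxConsistent a.val.val := a.val.property.1
    simp only [Sat, ih d a, hω.neg_mem_iff]
  | imp ψ χ ihψ ihχ =>
    intro d a
    have hω : MaxConsistent a.val.val := a.val.property.1
    simp only [Sat, ihψ d a, ihχ d a, hω.imp_mem_iff]
  | nec ψ ih =>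
    intro d a
    have hωΩ := a.val.property
    constructor
    · intro hs
      refine (nec_mem_omega_iff hX hωΩ).2 ?_
      by_contra hn
      obtain ⟨ω'', hΩ, hnot⟩ := exists_omega_not_mem hX hn
      exact hnot ((ih ⟨ω'', hΩ⟩ ⟨⟨ω'', hΩ⟩, fun _ => Iff.rfl⟩).1 (hs _ _))
    · intro hm d' a'
      exact (ih d' a').2 (a'.val.property.2 ψ ((nec_mem_omega_iff hX hωΩ).1 hm))
  | blame ψ ih =>
    intro d a
    have hωΩ := a.val.property
    have hω : MaxConsistent a.val.val := hωΩ.1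
    constructor
    · rintro ⟨h1, a', h2⟩
      by_contra hn
      have hnA : (ψ.blame).neg ∈ a.val.val := hω.neg_mem_iff.2 hn
      have hψ : ψ ∈ a.val.val := (ih d a).1 h1
      have hR : Formula.R ψ ∈ a.val.val :=
        hω.mp_mem (hω.mp_mem (hω.mem_of_prov (.taut (taut_mk_R ψ ψ.blame))) hψ) hnA
      have hsim : simRel a.val.val a'.val.val :=
        simRel_trans (simRel_symm a.property) a'.property
      have hR' : Formula.R ψ ∈ a'.val.val := (hsim ψ).1 hR
      have hω' : MaxConsistent a'.val.val := a'.val.property.1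
      have hψ' : ψ ∈ a'.val.val :=
        hω'.mp_mem (hω'.mem_of_prov (.taut (taut_notimp1 ψ ψ.blame))) hR'
      exact h2 ((ih d a').2 hψ')
    · intro hA
      refine ⟨(ih d a).2 (hω.mp_mem (hω.mem_of_prov (.truthA ψ)) hA), ?_⟩
      obtain ⟨ω'', hΩ, hsim, hnot⟩ := exists_blame_witness hX hωΩ hA
      refine ⟨⟨⟨ω'', hΩ⟩, simRel_trans a.property hsim⟩, fun hs => ?_⟩
      exact hnot ((ih d ⟨⟨ω'', hΩ⟩, simRel_trans a.property hsim⟩).1 hs)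

/-- Strong completeness: if `X₀ ⊬ φ`, then there is a security game, an action
`d` of the defender, and a response action `a` of the attacker such that
`(d,a) ⊨ χ` for each `χ ∈ X₀` and `(d,a) ⊭ φ`. -/
theorem strong_completeness (X₀ : Set Formula) (φ : Formula)
    (h : ¬ ProvFrom X₀ φ) :
    ∃ (G : SecurityGame) (d : G.D) (a : G.A d),
      (∀ χ ∈ X₀, Sat G χ d a) ∧ ¬ Sat G φ d a := by
  obtain ⟨X, hsub, hX⟩ := lindenbaum (consistent_insert_neg h)
  have hXΩ : X ∈ canonicalOmega X := self_mem_omega hX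
  refine ⟨canonicalGame X, ⟨X, hXΩ⟩, ⟨⟨X, hXΩ⟩, fun _ => Iff.rfl⟩, ?_, ?_⟩
  · intro χ hχ
    exact (truth_lemma hX χ _ _).2 (hsub (Set.mem_insert_of_mem _ hχ))
  · intro hs
    exact hX.not_both ((truth_lemma hX φ _ _).1 hs) (hsub (Set.mem_insert _ _))
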